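/- For every integer n ≥ 0, the number of tuples (α₁, α₂, α₃, α₄, α₅, α₆, β) ∈ ℤ⁷ such that all eight integers −α₁+β, α₁−α₂+β, α₂−α₃+β, α₃−α₄+β, α₄−α₅−β, α₅−α₆−β, α₆−β, −β have absolute value at most n equals A_7^b(n), the number of vectors p ∈ ℤ⁸ with |p_i| ≤ n for all i and p_1+⋯+p_8 = 0. -/

import Mathlib

/-- `Akb k n` : the number of vectors `p ∈ ℤ^(k+1)` with `|p i| ≤ n` for all `i`
and zero coordinate sum (bulk count for the `A_k` lattice). -/
noncomputable def Akb (k n : ℕ) : ℕ :=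
  Nat.card {p : Fin (k + 1) → ℤ // (∀ i, |p i| ≤ (n : ℤ)) ∧ ∑ i, p i = 0}

/-- `E7b n` : the number of integer-coordinate points of the `E₇` lattice whose
eight Cartesian coordinates all have absolute value at most `n`, parametrized by
tuples `(α₁, α₂, α₃, α₄, α₅, α₆, β) ∈ ℤ⁷`. -/
noncomputable def E7b (n : ℕ) : ℕ :=
  Nat.card {t : ℤ × ℤ × ℤ × ℤ × ℤ × ℤ × ℤ //
    |-t.1 + t.2.2.2.2.2.2| ≤ (n : ℤ) ∧
    |t.1 - t.2.1 + t.2.2.2.2.2.2| ≤ (n : ℤ) ∧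
    |t.2.1 - t.2.2.1 + t.2.2.2.2.2.2| ≤ (n : ℤ) ∧
    |t.2.2.1 - t.2.2.2.1 + t.2.2.2.2.2.2| ≤ (n : ℤ) ∧
    |t.2.2.2.1 - t.2.2.2.2.1 - t.2.2.2.2.2.2| ≤ (n : ℤ) ∧
    |t.2.2.2.2.1 - t.2.2.2.2.2.1 - t.2.2.2.2.2.2| ≤ (n : ℤ) ∧
    |t.2.2.2.2.2.1 - t.2.2.2.2.2.2| ≤ (n : ℤ) ∧
    |-t.2.2.2.2.2.2| ≤ (n : ℤ)}

private lemma cons_val_five' {α : Type*} (x0 x1 x2 x3 x4 x5 x6 x7 : α) :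
    ![x0,x1,x2,x3,x4,x5,x6,x7] 5 = x5 := rfl
private lemma cons_val_six' {α : Type*} (x0 x1 x2 x3 x4 x5 x6 x7 : α) :
    ![x0,x1,x2,x3,x4,x5,x6,x7] 6 = x6 := rfl
private lemma cons_val_seven' {α : Type*} (x0 x1 x2 x3 x4 x5 x6 x7 : α) :
    ![x0,x1,x2,x3,x4,x5,x6,x7] 7 = x7 := rfl

theorem E7_bulk (n : ℕ) : E7b n = Akb 7 n := by
  unfold E7b Akb
  refine Nat.card_congr ?_
  refine
    { toFun := fun t => ⟨![-t.1.1 + t.1.2.2.2.2.2.2,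
        t.1.1 - t.1.2.1 + t.1.2.2.2.2.2.2,
        t.1.2.1 - t.1.2.2.1 + t.1.2.2.2.2.2.2,
        t.1.2.2.1 - t.1.2.2.2.1 + t.1.2.2.2.2.2.2,
        t.1.2.2.2.1 - t.1.2.2.2.2.1 - t.1.2.2.2.2.2.2,
        t.1.2.2.2.2.1 - t.1.2.2.2.2.2.1 - t.1.2.2.2.2.2.2,
        t.1.2.2.2.2.2.1 - t.1.2.2.2.2.2.2,
        -t.1.2.2.2.2.2.2], ?_⟩
      invFun := fun p => ⟨(p.1 1 + p.1 2 + p.1 3 + p.1 4 + p.1 5 + p.1 6,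
        p.1 2 + p.1 3 + p.1 4 + p.1 5 + p.1 6 - p.1 7,
        p.1 3 + p.1 4 + p.1 5 + p.1 6 - 2 * p.1 7,
        p.1 4 + p.1 5 + p.1 6 - 3 * p.1 7,
        p.1 5 + p.1 6 - 2 * p.1 7,
        p.1 6 - p.1 7,
        -p.1 7), ?_⟩
      left_inv := ?_
      right_inv := ?_ }
  · obtain ⟨t, h1, h2, h3, h4, h5, h6, h7, h8⟩ := t
    refine ⟨fun i => ?_, ?_⟩
    · fin_cases i <;> first | simpa using ‹_› | simpa using h8
    · simp [Fin.sum_univ_eight, cons_val_five', cons_val_six', cons_val_seven']; ring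
  · obtain ⟨p, hb, hs⟩ := p
    rw [Fin.sum_univ_eight] at hs
    have h0 := hb 0; have h1 := hb 1; have h2 := hb 2; have h3 := hb 3
    have h4 := hb 4; have h5 := hb 5; have h6 := hb 6; have h7 := hb 7
    rw [abs_le] at h0 h1 h2 h3 h4 h5 h6 h7
    refine ⟨?_, ?_, ?_, ?_, ?_, ?_, ?_, ?_⟩ <;> rw [abs_le] <;>
      constructor <;> simp only [] <;> omega
  · rintro ⟨⟨a1, a2, a3, a4, a5, a6, b⟩, h⟩
    apply Subtype.ext
    simp only [Matrix.cons_val_zero, Matrix.cons_val_one, Matrix.head_cons,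
      Matrix.cons_val_two, Matrix.tail_cons, Matrix.cons_val_three, Matrix.cons_val_four,
      Matrix.head_fin_const, cons_val_five', cons_val_six', cons_val_seven', Prod.mk.injEq]
    refine ⟨by ring, by ring, by ring, by ring, by ring, by ring, by ring⟩
  · rintro ⟨p, hb, hs⟩
    rw [Fin.sum_univ_eight] at hs
    ext i
    fin_cases i <;> simp [cons_val_five', cons_val_six', cons_val_seven'] <;> omega
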